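/- The collection S = {X ⊆ 2^ω : no Borel image of X is a splitting family} is a σ-ideal on the Cantor space: if X ∈ S and Y ⊆ X then Y ∈ S, and if X_n ∈ S for every n ∈ ω then ⋃_{n∈ω} X_n ∈ S. -/

import Mathlib

/-- Identify an element of the Cantor space `ℕ → Bool` with a subset of `ℕ`. -/
def toSet (x : ℕ → Bool) : Set ℕ := {n | x n = true}

/-- A family `𝒜` of subsets of `ω` is a splitting family if every infinite `B ⊆ ω`
is split by some member of `𝒜`. -/
def IsSplitting (𝒜 : Set (Set ℕ)) : Prop :=
  ∀ B : Set ℕ, B.Infinite → ∃ A ∈ 𝒜, (A ∩ B).Infinite ∧ (B \ A).Infinite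

/-- `S` = the collection of sets `X ⊆ 2^ω` no Borel image of which is a splitting family. -/
def SIdeal : Set (Set (ℕ → Bool)) :=
  {X | ∀ f : (ℕ → Bool) → (ℕ → Bool), Measurable f → ¬ IsSplitting (toSet '' (f '' X))}

/-- Restriction of a subset of `ω` (coded as an element of Cantor space) along `e`. -/
def trace (e : ℕ → ℕ) (x : ℕ → Bool) : ℕ → Bool := fun k => x (e k)

lemma measurable_trace (e : ℕ → ℕ) : Measurable (trace e) :=
  measurable_pi_lambda _ fun k => measurable_pi_apply (e k)

/-- The key shrinking step: if `Xn ∈ SIdeal` and `f` is Borel, then inside any infinite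
`B ⊆ ω` there is an infinite `B' ⊆ B` which is unsplit by `toSet '' (f '' Xn)`. -/
lemma SIdeal.step {Xn : Set (ℕ → Bool)} (hXn : Xn ∈ SIdeal)
    (f : (ℕ → Bool) → (ℕ → Bool)) (hf : Measurable f) (B : Set ℕ) (hB : B.Infinite) :
    ∃ B' : Set ℕ, B' ⊆ B ∧ B'.Infinite ∧
      ∀ A ∈ toSet '' (f '' Xn), (A ∩ B').Finite ∨ (B' \ A).Finite := by
  classical
  set e : ℕ → ℕ := Nat.nth (· ∈ B) with he
  have hBset : {n | (· ∈ B) n}.Infinite := by simpa using hB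
  have hg : Measurable (trace e ∘ f) := (measurable_trace e).comp hf
  have hns := hXn _ hg
  unfold IsSplitting at hns
  push_neg at hns
  obtain ⟨C, hCinf, hCun⟩ := hns
  have heinj : Function.Injective e := Nat.nth_injective hBset
  have hemem : ∀ k, e k ∈ B := fun k => Nat.nth_mem_of_infinite hBset k
  refine ⟨e '' C, ?_, hCinf.image (heinj.injOn), ?_⟩
  · rintro m ⟨c, _, rfl⟩; exact hemem c
  · rintro A ⟨y, ⟨x, hx, rfl⟩, rfl⟩
    -- the corresponding trace set
    have hmem : toSet (trace e (f x)) ∈ toSet '' ((trace e ∘ f) '' Xn) :=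
      ⟨trace e (f x), ⟨x, hx, rfl⟩, rfl⟩
    have h1 : toSet (f x) ∩ e '' C = e '' (toSet (trace e (f x)) ∩ C) := by
      ext m
      constructor
      · rintro ⟨hmA, c, hcC, rfl⟩
        exact ⟨c, ⟨hmA, hcC⟩, rfl⟩
      · rintro ⟨c, ⟨hcA, hcC⟩, rfl⟩
        exact ⟨hcA, c, hcC, rfl⟩
    have h2 : e '' C \ toSet (f x) = e '' (C \ toSet (trace e (f x))) := by
      ext m
      constructor
      · rintro ⟨⟨c, hcC, rfl⟩, hmA⟩
        exact ⟨c, ⟨hcC, hmA⟩, rfl⟩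
      · rintro ⟨c, ⟨hcC, hcA⟩, rfl⟩
        exact ⟨⟨c, hcC, rfl⟩, hcA⟩
    have := hCun _ hmem
    rcases Set.finite_or_infinite (toSet (trace e (f x)) ∩ C) with hfin | hinf
    · left; rw [h1]; exact hfin.image e
    · right; rw [h2]
      exact (this hinf).image e

/-- `S` is a σ-ideal: it is closed under subsets and countable unions. -/
theorem SIdeal_sigmaIdeal :
    (∀ X Y : Set (ℕ → Bool), X ∈ SIdeal → Y ⊆ X → Y ∈ SIdeal) ∧
    (∀ X : ℕ → Set (ℕ → Bool), (∀ n, X n ∈ SIdeal) → (⋃ n, X n) ∈ SIdeal) := by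
  constructor
  · -- downward closure
    intro X Y hX hYX f hf hsplit
    apply hX f hf
    intro B hB
    obtain ⟨A, hA, hsp⟩ := hsplit B hB
    exact ⟨A, Set.image_mono (Set.image_mono hYX) hA, hsp⟩
  · -- countable unions
    intro X hX f hf hsplit
    classical
    -- choice function for the shrinking step
    have key : ∀ n (B : Set ℕ), B.Infinite → ∃ B' : Set ℕ, B' ⊆ B ∧ B'.Infinite ∧
        ∀ A ∈ toSet '' (f '' X n), (A ∩ B').Finite ∨ (B' \ A).Finite :=
      fun n B hB => SIdeal.step (hX n) f hf B hB
    choose F hF1 hF2 hF3 using key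
    -- the decreasing sequence of infinite sets
    let Bseq : ℕ → {s : Set ℕ // s.Infinite} := fun n =>
      Nat.rec ⟨Set.univ, Set.infinite_univ⟩ (fun n p => ⟨F n p.1 p.2, hF2 n p.1 p.2⟩) n
    have hsucc : ∀ n, (Bseq (n + 1)).1 ⊆ (Bseq n).1 := fun n =>
      hF1 n (Bseq n).1 (Bseq n).2
    have hanti : ∀ {m n : ℕ}, m ≤ n → (Bseq n).1 ⊆ (Bseq m).1 := by
      intro m n hmn
      induction hmn with
      | refl => exact fun _ h => h
      | step h ih => exact fun _ hx => (by exact ih (hsucc _ hx))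
    have hunsplit : ∀ n, ∀ A ∈ toSet '' (f '' X n),
        (A ∩ (Bseq (n + 1)).1).Finite ∨ ((Bseq (n + 1)).1 \ A).Finite := fun n =>
      hF3 n (Bseq n).1 (Bseq n).2
    -- diagonal pseudo-intersection
    have hd : ∀ n, ∃ m ∈ (Bseq (n + 1)).1, n < m := fun n =>
      (Bseq (n + 1)).2.exists_gt n
    choose d hd1 hd2 using hd
    set D : Set ℕ := Set.range d with hD
    have hDinf : D.Infinite := by
      apply Set.infinite_of_forall_exists_gt
      intro a
      exact ⟨d a, ⟨a, rfl⟩, hd2 a⟩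
    have hDsub : ∀ n, D \ (Bseq (n + 1)).1 ⊆ d '' (Set.Iio n) := by
      intro n m hm
      obtain ⟨⟨k, rfl⟩, hnot⟩ := hm
      refine ⟨k, ?_, rfl⟩
      by_contra hk
      simp only [Set.mem_Iio, not_lt] at hk
      exact hnot (hanti (Nat.succ_le_succ hk) (hd1 k))
    obtain ⟨A, hAmem, hA1, hA2⟩ := hsplit D hDinf
    obtain ⟨y, ⟨x, hx, rfl⟩, rfl⟩ := hAmem
    obtain ⟨n, hxn⟩ := Set.mem_iUnion.mp hx
    have hAn : toSet (f x) ∈ toSet '' (f '' X n) := ⟨f x, ⟨x, hxn, rfl⟩, rfl⟩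
    have hfinIio : (d '' Set.Iio n).Finite := (Set.finite_Iio n).image d
    rcases hunsplit n _ hAn with hfin | hfin
    · refine absurd hA1 (Set.not_infinite.mpr ?_)
      have : toSet (f x) ∩ D ⊆ (toSet (f x) ∩ (Bseq (n + 1)).1) ∪ (D \ (Bseq (n + 1)).1) := by
        intro m ⟨hmA, hmD⟩
        by_cases hmB : m ∈ (Bseq (n + 1)).1
        · exact Or.inl ⟨hmA, hmB⟩
        · exact Or.inr ⟨hmD, hmB⟩
      exact (hfin.union (hfinIio.subset (hDsub n))).subset this
    · refine absurd hA2 (Set.not_infinite.mpr ?_)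
      have : D \ toSet (f x) ⊆ ((Bseq (n + 1)).1 \ toSet (f x)) ∪ (D \ (Bseq (n + 1)).1) := by
        intro m ⟨hmD, hmA⟩
        by_cases hmB : m ∈ (Bseq (n + 1)).1
        · exact Or.inl ⟨hmB, hmA⟩
        · exact Or.inr ⟨hmD, hmB⟩
      exact (hfin.union (hfinIio.subset (hDsub n))).subset this
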